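/- Let 0 ≤ A ≤ B be constants and let φ_A and φ_B be the corresponding fundamental decreasing solutions. Then φ_A'(0) ≤ φ_B'(0), and for every x ≥ 0 one has −φ_A(x)/φ_A'(x) ≤ −φ_B(x)/φ_B'(x). -/

import Mathlib

open Set Filter

/-- Weak maximum principle setup: if a continuous function vanishes at `x₀`,
tends to `0` at infinity, and cannot be positive at any interior local max,
then it is nonpositive on `[x₀, ∞)`. -/
lemma aux_max_principle (d : ℝ → ℝ) (x₀ : ℝ) (hc : Continuous d)
    (hd0 : d x₀ = 0) (hdlim : Tendsto d atTop (nhds 0))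
    (H : ∀ x > x₀, IsLocalMax d x → ¬ (0 < d x)) :
    ∀ x ≥ x₀, d x ≤ 0 := by
  by_contra h
  push_neg at h
  obtain ⟨y, hy, hy0⟩ := h
  have hev : ∀ᶠ z in atTop, d z < d y := hdlim.eventually (Iio_mem_nhds hy0)
  obtain ⟨M0, hM0⟩ := eventually_atTop.mp hev
  set M := max M0 y with hM
  have hyM : y ≤ M := le_max_right _ _
  have hx₀M : x₀ ≤ M := le_trans hy hyM
  obtain ⟨c, hcmem, hcmax⟩ := isCompact_Icc.exists_isMaxOn (s := Icc x₀ M)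
    ⟨y, hy, hyM⟩ hc.continuousOn
  have hcmax' : ∀ z ∈ Icc x₀ M, d z ≤ d c := isMaxOn_iff.mp hcmax
  have hdyc : d y ≤ d c := hcmax' y ⟨hy, hyM⟩
  have hcpos : 0 < d c := lt_of_lt_of_le hy0 hdyc
  have hglob : ∀ z, x₀ < z → d z ≤ d c := by
    intro z hz
    rcases le_or_gt z M with h1 | h1
    · exact hcmax' z ⟨hz.le, h1⟩
    · have : d z < d y := hM0 z (le_trans (le_max_left _ _) h1.le)
      linarith
  have hcgt : x₀ < c := by
    rcases lt_or_eq_of_le hcmem.1 with h1 | h1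
    · exact h1
    · exfalso; rw [← h1] at hcpos; linarith
  have hloc : IsLocalMax d c := by
    have hmem : Ioi x₀ ∈ nhds c := isOpen_Ioi.mem_nhds hcgt
    exact Filter.eventually_of_mem hmem fun z hz => hglob z hz
  exact H c hcgt hloc hcpos

/-- Second derivative test (necessary condition): at a local max of a twice
differentiable function, the second derivative is nonpositive. -/
lemma aux_second_deriv_nonpos (f : ℝ → ℝ) (a : ℝ)
    (h1 : Differentiable ℝ f) (h2 : Differentiable ℝ (deriv f))
    (hmax : IsLocalMax f a) : deriv (deriv f) a ≤ 0 := by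
  by_contra h
  push_neg at h
  have hda : deriv f a = 0 := hmax.deriv_eq_zero
  have hslope := (h2 a).hasDerivAt
  rw [hasDerivAt_iff_tendsto_slope] at hslope
  have hslope' : Tendsto (slope (deriv f) a) (nhdsWithin a (Ioi a))
      (nhds (deriv (deriv f) a)) :=
    hslope.mono_left (nhdsWithin_mono a fun z hz => ne_of_gt hz)
  have hev : ∀ᶠ z in nhdsWithin a (Ioi a), 0 < slope (deriv f) a z :=
    hslope'.eventually (eventually_gt_nhds h)
  obtain ⟨u, hu, hsub⟩ := mem_nhdsGT_iff_exists_Ioo_subset.mp hev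
  have hderivpos : ∀ z ∈ Ioo a u, 0 < deriv f z := by
    intro z hz
    have := hsub hz
    simp only [mem_setOf_eq, slope_def_field, hda, sub_zero] at this
    have hza : 0 < z - a := by linarith [hz.1]
    by_contra hz'
    push_neg at hz'
    have : deriv f z / (z - a) ≤ 0 := div_nonpos_of_nonpos_of_nonneg hz' hza.le
    linarith
  have hmono : StrictMonoOn f (Icc a u) := by
    apply strictMonoOn_of_deriv_pos (convex_Icc a u) h1.continuous.continuousOn
    intro z hz
    rw [interior_Icc] at hz
    exact hderivpos z hz
  have hmax' : ∀ᶠ z in nhdsWithin a (Ioi a), f z ≤ f a :=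
    hmax.filter_mono nhdsWithin_le_nhds
  have hmem : Ioo a u ∈ nhdsWithin a (Ioi a) := Ioo_mem_nhdsGT_of_mem ⟨le_refl a, hu⟩
  obtain ⟨z, hz1, hz2⟩ := (hmax'.and (Filter.eventually_of_mem hmem fun z hz => hz)).exists
  have : f a < f z := hmono ⟨le_refl a, (mem_Ioi.mp hu).le⟩ ⟨hz2.1.le, hz2.2.le⟩ hz2.1
  linarith

/-- If a differentiable function vanishes at `a` and is nonpositive on `[a,∞)`,
its derivative at `a` is nonpositive. -/
lemma aux_deriv_nonpos_at_left (f : ℝ → ℝ) (a : ℝ) (hd : DifferentiableAt ℝ f a)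
    (h0 : f a = 0) (hle : ∀ x ≥ a, f x ≤ 0) : deriv f a ≤ 0 := by
  have h := hd.hasDerivAt
  rw [hasDerivAt_iff_tendsto_slope] at h
  have h' : Tendsto (slope f a) (nhdsWithin a (Ioi a)) (nhds (deriv f a)) :=
    h.mono_left (nhdsWithin_mono a fun z hz => ne_of_gt hz)
  refine le_of_tendsto h' ?_
  filter_upwards [self_mem_nhdsWithin] with z hz
  rw [slope_def_field, h0, sub_zero]
  have hza : (0:ℝ) < z - a := by simpa using sub_pos.mpr (mem_Ioi.mp hz)
  exact div_nonpos_of_nonpos_of_nonneg (hle z (le_of_lt (mem_Ioi.mp hz))) hza.le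

/-- monotonicity in the drift shift of the fundamental decreasing
solutions: for 0 ≤ A ≤ B one has φ_A'(0) ≤ φ_B'(0) and
−φ_A(x)/φ_A'(x) ≤ −φ_B(x)/φ_B'(x) for every x ≥ 0. -/
theorem stmt_16
    (r : ℝ) (hr : 0 < r)
    (μ σ : ℝ → ℝ) (hμ : ContDiff ℝ 1 μ) (hσ : ContDiff ℝ 1 σ)
    (hσpos : ∀ x ≥ (0:ℝ), 0 < σ x ^ 2)
    (hμderiv : ∀ x ≥ (0:ℝ), deriv μ x < r)
    (φ : ℝ → ℝ → ℝ)
    (hφC : ∀ A ≥ (0:ℝ), ContDiff ℝ 2 (φ A))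
    (hφ0 : ∀ A ≥ (0:ℝ), φ A 0 = 1)
    (hφpos : ∀ A ≥ (0:ℝ), ∀ x ≥ (0:ℝ), 0 < φ A x)
    (hφanti : ∀ A ≥ (0:ℝ), AntitoneOn (φ A) (Ici (0:ℝ)))
    (hφlim : ∀ A ≥ (0:ℝ), Tendsto (φ A) atTop (nhds 0))
    (hφODE : ∀ A ≥ (0:ℝ), ∀ x ≥ (0:ℝ),
      (1/2) * σ x ^ 2 * deriv (deriv (φ A)) x + (μ x - A) * deriv (φ A) x - r * φ A x = 0)
    (hφdneg : ∀ A ≥ (0:ℝ), ∀ x ≥ (0:ℝ), deriv (φ A) x < 0)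
    (hφddpos : ∀ A ≥ (0:ℝ), ∀ x ≥ (0:ℝ), 0 < deriv (deriv (φ A)) x)
    (A B : ℝ) (hA : 0 ≤ A) (hAB : A ≤ B) :
    deriv (φ A) 0 ≤ deriv (φ B) 0 ∧
    ∀ x ≥ (0:ℝ), -(φ A x) / deriv (φ A) x ≤ -(φ B x) / deriv (φ B) x := by
  have hB : (0:ℝ) ≤ B := le_trans hA hAB
  have hdA : Differentiable ℝ (φ A) := (hφC A hA).differentiable (by norm_num)
  have hdB : Differentiable ℝ (φ B) := (hφC B hB).differentiable (by norm_num)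
  have hdA2 : Differentiable ℝ (deriv (φ A)) := by
    have := (contDiff_succ_iff_deriv.mp (by exact_mod_cast hφC A hA : ContDiff ℝ (1+1) (φ A))).2.2
    exact this.differentiable (by norm_num)
  have hdB2 : Differentiable ℝ (deriv (φ B)) := by
    have := (contDiff_succ_iff_deriv.mp (by exact_mod_cast hφC B hB : ContDiff ℝ (1+1) (φ B))).2.2
    exact this.differentiable (by norm_num)
  -- Key comparison of logarithmic derivatives
  have key : ∀ x₀ ≥ (0:ℝ), φ B x₀ * deriv (φ A) x₀ ≤ φ A x₀ * deriv (φ B) x₀ := by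
    intro x₀ hx₀
    have hcApos : 0 < φ A x₀ := hφpos A hA x₀ hx₀
    have hcBpos : 0 < φ B x₀ := hφpos B hB x₀ hx₀
    set cA := φ A x₀ with hcA
    set cB := φ B x₀ with hcB
    set d : ℝ → ℝ := fun z => cB * φ A z - cA * φ B z with hd
    have hcont : Continuous d := by
      exact (continuous_const.mul hdA.continuous).sub (continuous_const.mul hdB.continuous)
    have hd0 : d x₀ = 0 := by simp only [hd]; ring
    have hdlim : Tendsto d atTop (nhds 0) := by
      have := ((hφlim A hA).const_mul cB).sub ((hφlim B hB).const_mul cA)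
      simpa using this
    have hd1 : deriv d = fun z => cB * deriv (φ A) z - cA * deriv (φ B) z := by
      funext z
      rw [hd, deriv_fun_sub ((hdA z).const_mul cB) ((hdB z).const_mul cA),
        deriv_const_mul cB (hdA z), deriv_const_mul cA (hdB z)]
    have hddiff : Differentiable ℝ d := (hdA.const_mul cB).sub (hdB.const_mul cA)
    have hddiff2 : Differentiable ℝ (deriv d) := by
      rw [hd1]; exact (hdA2.const_mul cB).sub (hdB2.const_mul cA)
    have H : ∀ x > x₀, IsLocalMax d x → ¬ (0 < d x) := by
      intro x hx hmax hpos
      have hx0 : (0:ℝ) ≤ x := le_trans hx₀ hx.le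
      have h1 : deriv d x = 0 := hmax.deriv_eq_zero
      have h2 : deriv (deriv d) x ≤ 0 := aux_second_deriv_nonpos d x hddiff hddiff2 hmax
      have hd1x : cB * deriv (φ A) x - cA * deriv (φ B) x = 0 := by
        rw [hd1] at h1; exact h1
      have hd2x : deriv (deriv d) x =
          cB * deriv (deriv (φ A)) x - cA * deriv (deriv (φ B)) x := by
        rw [hd1, deriv_fun_sub ((hdA2 x).const_mul cB) ((hdB2 x).const_mul cA),
          deriv_const_mul cB (hdA2 x), deriv_const_mul cA (hdB2 x)]
      rw [hd2x] at h2
      have eA := hφODE A hA x hx0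
      have eB := hφODE B hB x hx0
      have hpA : deriv (φ A) x < 0 := hφdneg A hA x hx0
      have hσ2 : 0 < σ x ^ 2 := hσpos x hx0
      have hposx : 0 < cB * φ A x - cA * φ B x := hpos
      -- combine: (1/2)σ² (cB φA'' - cA φB'') + (B-A)(cB φA') - r (d x) = 0
      have E : (1/2) * σ x ^ 2 * (cB * deriv (deriv (φ A)) x - cA * deriv (deriv (φ B)) x)
          + (B - A) * (cB * deriv (φ A) x) - r * (cB * φ A x - cA * φ B x) = 0 := by
        linear_combination cB * eA - cA * eB - (μ x - B) * hd1x
      have h3 : (1/2) * σ x ^ 2 *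
          (cB * deriv (deriv (φ A)) x - cA * deriv (deriv (φ B)) x) ≤ 0 := by
        have := mul_nonneg (by positivity : (0:ℝ) ≤ (1/2) * σ x ^ 2)
          (neg_nonneg.mpr h2)
        nlinarith
      have h4 : (B - A) * (cB * deriv (φ A) x) ≤ 0 :=
        mul_nonpos_of_nonneg_of_nonpos (by linarith)
          (mul_nonpos_of_nonneg_of_nonpos hcBpos.le hpA.le)
      nlinarith [mul_pos hr hposx]
    have hle := aux_max_principle d x₀ hcont hd0 hdlim H
    have hder := aux_deriv_nonpos_at_left d x₀ (hddiff x₀) hd0 hle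
    rw [hd1] at hder
    simp only at hder
    linarith
  constructor
  · have := key 0 le_rfl
    rw [hφ0 A hA, hφ0 B hB] at this
    linarith
  · intro x hx
    have hk := key x hx
    have ha : 0 < φ A x := hφpos A hA x hx
    have hb : 0 < φ B x := hφpos B hB x hx
    have ha' : deriv (φ A) x < 0 := hφdneg A hA x hx
    have hb' : deriv (φ B) x < 0 := hφdneg B hB x hx
    rw [show -(φ A x) / deriv (φ A) x = φ A x / (-(deriv (φ A) x)) by
        rw [div_neg, neg_div],
      show -(φ B x) / deriv (φ B) x = φ B x / (-(deriv (φ B) x)) by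
        rw [div_neg, neg_div],
      div_le_div_iff₀ (by linarith) (by linarith)]
    nlinarith
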